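/- Fix x ∈ [0,1]. The operator F : C([0,1], ℝ) → ℝ defined by F(η) = Dφ_η(x) = exp(∫₀ˣ η(t) dt) / (∫₀¹ exp(∫₀ˢ η(t) dt) ds) is Fréchet differentiable at every η ∈ C([0,1], ℝ) (with respect to the supremum norm), with derivative Δη ↦ ( exp(∫₀ˣ η) / (∫₀¹ exp(∫₀ˢ η) ds)² ) · ( (∫₀¹ exp(∫₀ˢ η) ds) · ∫₀ˣ Δη(t) dt − ∫₀¹ exp(∫₀ˢ η) · (∫₀ˢ Δη(t) dt) ds ), and this derivative is a bounded linear functional whose norm is bounded uniformly for η in any bounded subset of C([0,1], ℝ). -/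

import Mathlib

open Set MeasureTheory

/-- Extension of a continuous function on `[0,1]` to `ℝ` (constant outside `[0,1]`). -/
noncomputable def extIcc (η : C(Set.Icc (0:ℝ) 1, ℝ)) : ℝ → ℝ :=
  fun t => η (Set.projIcc (0:ℝ) 1 zero_le_one t)

/-- `F(η) = Dφ_η(x) = exp(∫₀ˣ η) / ∫₀¹ exp(∫₀ˢ η) ds`. -/
noncomputable def Dphi (η : C(Set.Icc (0:ℝ) 1, ℝ)) (x : ℝ) : ℝ :=
  Real.exp (∫ t in (0:ℝ)..x, extIcc η t) /
  (∫ s in (0:ℝ)..1, Real.exp (∫ t in (0:ℝ)..s, extIcc η t))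

section Aux

lemma continuous_extIcc (η : C(Set.Icc (0:ℝ) 1, ℝ)) : Continuous (extIcc η) :=
  η.continuous.comp continuous_projIcc

lemma extIcc_abs_le (η : C(Set.Icc (0:ℝ) 1, ℝ)) (t : ℝ) : |extIcc η t| ≤ ‖η‖ := by
  simpa [Real.norm_eq_abs, extIcc] using η.norm_coe_le_norm (Set.projIcc (0:ℝ) 1 zero_le_one t)

lemma intInt_extIcc (η : C(Set.Icc (0:ℝ) 1, ℝ)) (a b : ℝ) :
    IntervalIntegrable (extIcc η) volume a b :=
  (continuous_extIcc η).intervalIntegrable a b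

lemma abs_int_extIcc_le (η : C(Set.Icc (0:ℝ) 1, ℝ)) (s : Set.Icc (0:ℝ) 1) :
    |∫ t in (0:ℝ)..(s:ℝ), extIcc η t| ≤ ‖η‖ := by
  have h := intervalIntegral.norm_integral_le_of_norm_le_const
    (f := extIcc η) (a := 0) (b := (s:ℝ)) (C := ‖η‖)
    (fun t _ => by simpa [Real.norm_eq_abs] using extIcc_abs_le η t)
  have hs := s.2
  have h1 : |(s:ℝ) - 0| ≤ 1 := by
    rw [abs_of_nonneg (by simpa using hs.1)]; simpa using hs.2
  calc |∫ t in (0:ℝ)..(s:ℝ), extIcc η t| ≤ ‖η‖ * |(s:ℝ) - 0| := by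
        simpa [Real.norm_eq_abs] using h
    _ ≤ ‖η‖ * 1 := mul_le_mul_of_nonneg_left h1 (norm_nonneg η)
    _ = ‖η‖ := mul_one _

/-- `V η` is the primitive `s ↦ ∫₀ˢ η`, as a continuous linear map. -/
noncomputable def Vmap : C(Set.Icc (0:ℝ) 1, ℝ) →L[ℝ] C(Set.Icc (0:ℝ) 1, ℝ) := by
  refine LinearMap.mkContinuous
    { toFun := fun η => ⟨fun s => ∫ t in (0:ℝ)..(s:ℝ), extIcc η t, ?_⟩
      map_add' := ?_
      map_smul' := ?_ } 1 ?_
  · exact (intervalIntegral.continuous_primitive (intInt_extIcc η) 0).comp continuous_subtype_val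
  · intro η ζ
    ext s
    simp only [ContinuousMap.coe_mk, ContinuousMap.add_apply]
    rw [← intervalIntegral.integral_add (intInt_extIcc η _ _) (intInt_extIcc ζ _ _)]
    rfl
  · intro c η
    ext s
    simp only [ContinuousMap.coe_mk, ContinuousMap.smul_apply, RingHom.id_apply, smul_eq_mul]
    rw [← intervalIntegral.integral_const_mul]
    rfl
  · intro η
    rw [one_mul]
    refine ContinuousMap.norm_le _ (norm_nonneg η) |>.2 fun s => ?_
    simpa [Real.norm_eq_abs] using abs_int_extIcc_le η s

lemma Vmap_apply (η : C(Set.Icc (0:ℝ) 1, ℝ)) (s : Set.Icc (0:ℝ) 1) :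
    Vmap η s = ∫ t in (0:ℝ)..(s:ℝ), extIcc η t := rfl

lemma norm_Vmap_apply_le (η : C(Set.Icc (0:ℝ) 1, ℝ)) : ‖Vmap η‖ ≤ ‖η‖ := by
  refine ContinuousMap.norm_le _ (norm_nonneg η) |>.2 fun s => ?_
  simpa [Real.norm_eq_abs, Vmap_apply] using abs_int_extIcc_le η s

/-- Integration over `[0,1]` as a continuous linear functional. -/
noncomputable def Imap : C(Set.Icc (0:ℝ) 1, ℝ) →L[ℝ] ℝ := by
  refine LinearMap.mkContinuous
    { toFun := fun η => ∫ s in (0:ℝ)..1, extIcc η s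
      map_add' := fun η ζ => by
        rw [← intervalIntegral.integral_add (intInt_extIcc η _ _) (intInt_extIcc ζ _ _)]; rfl
      map_smul' := fun c η => by
        rw [RingHom.id_apply, smul_eq_mul, ← intervalIntegral.integral_const_mul]; rfl } 1 ?_
  intro η
  rw [one_mul]
  have h := intervalIntegral.norm_integral_le_of_norm_le_const
    (f := extIcc η) (a := 0) (b := 1) (C := ‖η‖)
    (fun t _ => by simpa [Real.norm_eq_abs] using extIcc_abs_le η t)
  simpa using h

lemma Imap_apply (η : C(Set.Icc (0:ℝ) 1, ℝ)) : Imap η = ∫ s in (0:ℝ)..1, extIcc η s := rfl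

lemma abs_Imap_le (η : C(Set.Icc (0:ℝ) 1, ℝ)) : |Imap η| ≤ ‖η‖ := by
  have h := intervalIntegral.norm_integral_le_of_norm_le_const
    (f := extIcc η) (a := 0) (b := 1) (C := ‖η‖)
    (fun t _ => by simpa [Real.norm_eq_abs] using extIcc_abs_le η t)
  simpa [Imap_apply, Real.norm_eq_abs] using h

/-- Pointwise exponential operator on `C([0,1],ℝ)`. -/
noncomputable def expC (u : C(Set.Icc (0:ℝ) 1, ℝ)) : C(Set.Icc (0:ℝ) 1, ℝ) :=
  ⟨fun t => Real.exp (u t), Real.continuous_exp.comp u.continuous⟩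

lemma expC_apply (u : C(Set.Icc (0:ℝ) 1, ℝ)) (t) : expC u t = Real.exp (u t) := rfl

lemma norm_expC_le (u : C(Set.Icc (0:ℝ) 1, ℝ)) : ‖expC u‖ ≤ Real.exp ‖u‖ := by
  refine ContinuousMap.norm_le _ (Real.exp_nonneg _) |>.2 fun t => ?_
  rw [expC_apply, Real.norm_eq_abs, abs_of_pos (Real.exp_pos _)]
  exact Real.exp_le_exp.2 ((le_abs_self _).trans
    (by simpa [Real.norm_eq_abs] using u.norm_coe_le_norm t))

lemma hasFDerivAt_expC (u : C(Set.Icc (0:ℝ) 1, ℝ)) :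
    HasFDerivAt expC (ContinuousLinearMap.mul ℝ C(Set.Icc (0:ℝ) 1, ℝ) (expC u)) u := by
  rw [hasFDerivAt_iff_isLittleO_nhds_zero]
  have key : ∀ h : C(Set.Icc (0:ℝ) 1, ℝ), ‖h‖ ≤ 1 →
      ‖expC (u + h) - expC u - expC u * h‖ ≤ ‖expC u‖ * (‖h‖ * ‖h‖) := by
    intro h hh
    refine ContinuousMap.norm_le _ (by positivity) |>.2 fun t => ?_
    have hht : |h t| ≤ ‖h‖ := by simpa [Real.norm_eq_abs] using h.norm_coe_le_norm t
    have h1 : |h t| ≤ 1 := hht.trans hh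
    have hb : |Real.exp (h t) - 1 - h t| ≤ (h t) ^ 2 := Real.abs_exp_sub_one_sub_id_le h1
    have hut : |expC u t| ≤ ‖expC u‖ := by
      simpa [Real.norm_eq_abs] using (expC u).norm_coe_le_norm t
    have expand : (expC (u + h) - expC u - expC u * h) t
        = Real.exp (u t) * (Real.exp (h t) - 1 - h t) := by
      simp only [ContinuousMap.sub_apply, ContinuousMap.mul_apply, expC_apply,
        ContinuousMap.add_apply, Real.exp_add]
      ring
    rw [Real.norm_eq_abs, expand, abs_mul]
    have h2 : (h t)^2 ≤ ‖h‖ * ‖h‖ := by nlinarith [abs_nonneg (h t), sq_abs (h t)]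
    have h3 : |Real.exp (u t)| = |expC u t| := rfl
    calc |Real.exp (u t)| * |Real.exp (h t) - 1 - h t|
        ≤ ‖expC u‖ * ((h t)^2) :=
          mul_le_mul (h3 ▸ hut) hb (abs_nonneg _) (norm_nonneg _)
      _ ≤ ‖expC u‖ * (‖h‖ * ‖h‖) := mul_le_mul_of_nonneg_left h2 (norm_nonneg _)
  rw [Asymptotics.isLittleO_iff]
  intro c hc
  rw [Metric.eventually_nhds_iff]
  refine ⟨min 1 (c / (‖expC u‖ + 1)), lt_min one_pos (by positivity), fun h hd => ?_⟩
  rw [dist_zero_right] at hd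
  have hh1 : ‖h‖ ≤ 1 := le_of_lt (lt_of_lt_of_le hd (min_le_left _ _))
  have hh2 : ‖h‖ ≤ c / (‖expC u‖ + 1) := le_of_lt (lt_of_lt_of_le hd (min_le_right _ _))
  have hk := key h hh1
  have happ : (ContinuousLinearMap.mul ℝ C(Set.Icc (0:ℝ) 1, ℝ) (expC u)) h = expC u * h := rfl
  rw [happ]
  refine hk.trans ?_
  have hE : (0:ℝ) ≤ ‖expC u‖ := norm_nonneg _
  have hbound : ‖expC u‖ * ‖h‖ ≤ c := by
    calc ‖expC u‖ * ‖h‖ ≤ (‖expC u‖ + 1) * (c / (‖expC u‖ + 1)) :=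
          mul_le_mul (by linarith) hh2 (norm_nonneg _) (by linarith)
      _ = c := by field_simp
  calc ‖expC u‖ * (‖h‖ * ‖h‖) = (‖expC u‖ * ‖h‖) * ‖h‖ := by ring
    _ ≤ c * ‖h‖ := mul_le_mul_of_nonneg_right hbound (norm_nonneg _)

lemma extIcc_eq_of_mem (g : C(Set.Icc (0:ℝ) 1, ℝ)) {s : ℝ} (hs : s ∈ Set.Icc (0:ℝ) 1) :
    extIcc g s = g ⟨s, hs⟩ := by
  unfold extIcc
  rw [Set.projIcc_of_mem]

lemma den_eq (ζ : C(Set.Icc (0:ℝ) 1, ℝ)) :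
    Imap (expC (Vmap ζ)) = ∫ s in (0:ℝ)..1, Real.exp (∫ t in (0:ℝ)..s, extIcc ζ t) := by
  rw [Imap_apply]
  refine intervalIntegral.integral_congr fun s hs => ?_
  rw [Set.uIcc_of_le zero_le_one] at hs
  rw [extIcc_eq_of_mem _ hs, expC_apply, Vmap_apply]

lemma DD_eq (η Δη : C(Set.Icc (0:ℝ) 1, ℝ)) :
    Imap (expC (Vmap η) * Vmap Δη) =
      ∫ s in (0:ℝ)..1, Real.exp (∫ t in (0:ℝ)..s, extIcc η t) *
        (∫ t in (0:ℝ)..s, extIcc Δη t) := by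
  rw [Imap_apply]
  refine intervalIntegral.integral_congr fun s hs => ?_
  rw [Set.uIcc_of_le zero_le_one] at hs
  rw [extIcc_eq_of_mem _ hs, ContinuousMap.mul_apply, expC_apply, Vmap_apply, Vmap_apply]

lemma den_pos (ζ : C(Set.Icc (0:ℝ) 1, ℝ)) : 0 < Imap (expC (Vmap ζ)) := by
  rw [Imap_apply]
  refine intervalIntegral.intervalIntegral_pos_of_pos (intInt_extIcc _ 0 1) (fun s => ?_) one_pos
  exact Real.exp_pos _

lemma den_lower (ζ : C(Set.Icc (0:ℝ) 1, ℝ)) : Real.exp (-‖ζ‖) ≤ Imap (expC (Vmap ζ)) := by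
  rw [Imap_apply]
  have h : ∀ s ∈ Set.Icc (0:ℝ) 1, Real.exp (-‖ζ‖) ≤ extIcc (expC (Vmap ζ)) s := by
    intro s _
    unfold extIcc
    rw [expC_apply, Vmap_apply]
    refine Real.exp_le_exp.2 ?_
    have := abs_int_extIcc_le ζ (Set.projIcc (0:ℝ) 1 zero_le_one s)
    linarith [neg_abs_le (∫ t in (0:ℝ)..((Set.projIcc (0:ℝ) 1 zero_le_one s : Set.Icc (0:ℝ) 1):ℝ), extIcc ζ t)]
  calc Real.exp (-‖ζ‖) = ∫ _ in (0:ℝ)..1, Real.exp (-‖ζ‖) := by simp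
    _ ≤ ∫ s in (0:ℝ)..1, extIcc (expC (Vmap ζ)) s :=
        intervalIntegral.integral_mono_on zero_le_one
          (intervalIntegrable_const) (intInt_extIcc _ 0 1) h

end Aux

/-- The operator `F : η ↦ Dφ_η(x)` on `C([0,1],ℝ)` (with the sup norm) is Fréchet
differentiable at every `η`, with derivative
`Δη ↦ (e^{∫₀ˣη}/(∫₀¹e^{∫₀ˢη}ds)²)·((∫₀¹e^{∫₀ˢη}ds)·∫₀ˣΔη − ∫₀¹e^{∫₀ˢη}·(∫₀ˢΔη)ds)`,
and the norm of this derivative is bounded uniformly on bounded subsets of `C([0,1],ℝ)`. -/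
theorem derivative_evaluation_operator_hasFDerivAt
    (x : ℝ) (hx : x ∈ Set.Icc (0:ℝ) 1) :
    ∃ DF : C(Set.Icc (0:ℝ) 1, ℝ) → (C(Set.Icc (0:ℝ) 1, ℝ) →L[ℝ] ℝ),
      (∀ η, HasFDerivAt (fun ζ => Dphi ζ x) (DF η) η) ∧
      (∀ η Δη,
        DF η Δη =
          Real.exp (∫ t in (0:ℝ)..x, extIcc η t) /
              (∫ s in (0:ℝ)..1, Real.exp (∫ t in (0:ℝ)..s, extIcc η t)) ^ 2 *
            ((∫ s in (0:ℝ)..1, Real.exp (∫ t in (0:ℝ)..s, extIcc η t)) *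
                (∫ t in (0:ℝ)..x, extIcc Δη t) -
              ∫ s in (0:ℝ)..1,
                Real.exp (∫ t in (0:ℝ)..s, extIcc η t) *
                  (∫ t in (0:ℝ)..s, extIcc Δη t))) ∧
      (∀ R : ℝ, ∃ M : ℝ, ∀ η : C(Set.Icc (0:ℝ) 1, ℝ), ‖η‖ ≤ R → ‖DF η‖ ≤ M) := by
  set x' : Set.Icc (0:ℝ) 1 := ⟨x, hx⟩ with hx'
  set E : C(Set.Icc (0:ℝ) 1, ℝ) →L[ℝ] ℝ := ContinuousMap.evalCLM ℝ x' with hE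
  -- numerator and denominator
  set num : C(Set.Icc (0:ℝ) 1, ℝ) → ℝ := fun ζ => E (expC (Vmap ζ)) with hnumdef
  set den : C(Set.Icc (0:ℝ) 1, ℝ) → ℝ := fun ζ => Imap (expC (Vmap ζ)) with hdendef
  set DN : C(Set.Icc (0:ℝ) 1, ℝ) → (C(Set.Icc (0:ℝ) 1, ℝ) →L[ℝ] ℝ) := fun η =>
    E.comp ((ContinuousLinearMap.mul ℝ C(Set.Icc (0:ℝ) 1, ℝ) (expC (Vmap η))).comp Vmap) with hDN
  set DD : C(Set.Icc (0:ℝ) 1, ℝ) → (C(Set.Icc (0:ℝ) 1, ℝ) →L[ℝ] ℝ) := fun η =>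
    Imap.comp ((ContinuousLinearMap.mul ℝ C(Set.Icc (0:ℝ) 1, ℝ) (expC (Vmap η))).comp Vmap)
    with hDD
  have Eapp : ∀ g : C(Set.Icc (0:ℝ) 1, ℝ), E g = g x' := fun g => rfl
  have num_eq : ∀ ζ, num ζ = Real.exp (∫ t in (0:ℝ)..x, extIcc ζ t) := fun ζ => rfl
  have DNapp : ∀ η Δη, DN η Δη =
      Real.exp (∫ t in (0:ℝ)..x, extIcc η t) * (∫ t in (0:ℝ)..x, extIcc Δη t) := fun η Δη => rfl
  have DDapp : ∀ η Δη, DD η Δη = Imap (expC (Vmap η) * Vmap Δη) := fun η Δη => rfl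
  have hden_pos : ∀ ζ, 0 < den ζ := fun ζ => den_pos ζ
  have hden_ne : ∀ ζ, den ζ ≠ 0 := fun ζ => (hden_pos ζ).ne'
  refine ⟨fun η => num η • ((ContinuousLinearMap.smulRight (1 : ℝ →L[ℝ] ℝ)
      (-((den η) ^ 2)⁻¹)).comp (DD η)) + (den η)⁻¹ • (DN η), ?_, ?_, ?_⟩
  · -- differentiability
    intro η
    have hΦ : HasFDerivAt (fun ζ => expC (Vmap ζ))
        ((ContinuousLinearMap.mul ℝ C(Set.Icc (0:ℝ) 1, ℝ) (expC (Vmap η))).comp Vmap) η :=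
      (hasFDerivAt_expC (Vmap η)).comp η Vmap.hasFDerivAt
    have hnum : HasFDerivAt num (DN η) η := E.hasFDerivAt.comp η hΦ
    have hden : HasFDerivAt den (DD η) η := Imap.hasFDerivAt.comp η hΦ
    have hinv : HasFDerivAt (fun ζ => (den ζ)⁻¹)
        ((ContinuousLinearMap.smulRight (1 : ℝ →L[ℝ] ℝ)
          (-((den η) ^ 2)⁻¹)).comp (DD η)) η :=
      (hasFDerivAt_inv (hden_ne η)).comp η hden
    have hmul := hnum.mul hinv
    have hfun : (fun ζ => Dphi ζ x) = fun ζ => num ζ * (den ζ)⁻¹ := by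
      funext ζ
      rw [Dphi, div_eq_mul_inv, num_eq ζ]
      congr 2
      exact (den_eq ζ).symm
    rw [hfun]
    exact hmul
  · -- formula
    intro η Δη
    have hd := hden_ne η
    simp only [ContinuousLinearMap.add_apply, ContinuousLinearMap.smul_apply,
      ContinuousLinearMap.comp_apply, ContinuousLinearMap.smulRight_apply,
      ContinuousLinearMap.one_apply, smul_eq_mul]
    rw [DNapp, DDapp, DD_eq]
    rw [num_eq]
    have hdeq : den η = ∫ s in (0:ℝ)..1, Real.exp (∫ t in (0:ℝ)..s, extIcc η t) := den_eq η
    rw [← hdeq]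
    field_simp
    try ring
  · -- uniform bound
    intro R
    refine ⟨2 * Real.exp (4 * R), ?_⟩
    intro η hR
    have hR0 : (0:ℝ) ≤ R := le_trans (norm_nonneg η) hR
    have hM0 : (0:ℝ) ≤ 2 * Real.exp (4 * R) := by positivity
    refine ContinuousLinearMap.opNorm_le_bound _ hM0 fun Δη => ?_
    have hnum_le : |num η| ≤ Real.exp R := by
      rw [num_eq, abs_of_pos (Real.exp_pos _)]
      refine Real.exp_le_exp.2 ?_
      have := abs_int_extIcc_le η x'
      have h2 : (∫ t in (0:ℝ)..x, extIcc η t) ≤ ‖η‖ :=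
        le_trans (le_abs_self _) (by simpa using this)
      linarith
    have hVd : ‖Vmap Δη‖ ≤ ‖Δη‖ := norm_Vmap_apply_le Δη
    have hExp : ‖expC (Vmap η)‖ ≤ Real.exp R := by
      refine (norm_expC_le _).trans (Real.exp_le_exp.2 ?_)
      exact le_trans (norm_Vmap_apply_le η) hR
    have hDN_le : |DN η Δη| ≤ Real.exp R * ‖Δη‖ := by
      rw [DNapp, abs_mul]
      have h1 : |Real.exp (∫ t in (0:ℝ)..x, extIcc η t)| ≤ Real.exp R := by
        rw [← num_eq]; exact hnum_le
      have h2 : |∫ t in (0:ℝ)..x, extIcc Δη t| ≤ ‖Δη‖ := by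
        simpa using abs_int_extIcc_le Δη x'
      exact mul_le_mul h1 h2 (abs_nonneg _) (Real.exp_nonneg _)
    have hDD_le : |DD η Δη| ≤ Real.exp R * ‖Δη‖ := by
      rw [DDapp]
      refine (abs_Imap_le _).trans ?_
      calc ‖expC (Vmap η) * Vmap Δη‖ ≤ ‖expC (Vmap η)‖ * ‖Vmap Δη‖ := norm_mul_le _ _
        _ ≤ Real.exp R * ‖Δη‖ :=
            mul_le_mul hExp hVd (norm_nonneg _) (Real.exp_nonneg _)
    have hden_lb : Real.exp (-R) ≤ den η := by
      refine le_trans (Real.exp_le_exp.2 (by linarith)) (den_lower η)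
    have hdinv : (den η)⁻¹ ≤ Real.exp R := by
      have h1 : 1 / den η ≤ 1 / Real.exp (-R) :=
        one_div_le_one_div_of_le (Real.exp_pos _) hden_lb
      rwa [one_div, one_div, Real.exp_neg, inv_inv] at h1
    have hdinv0 : (0:ℝ) < (den η)⁻¹ := inv_pos.2 (hden_pos η)
    have hd2inv : ((den η) ^ 2)⁻¹ ≤ Real.exp R * Real.exp R := by
      rw [sq, mul_inv]
      exact mul_le_mul hdinv hdinv (le_of_lt hdinv0) (Real.exp_nonneg _)
    simp only [ContinuousLinearMap.add_apply, ContinuousLinearMap.smul_apply,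
      ContinuousLinearMap.comp_apply, ContinuousLinearMap.smulRight_apply,
      ContinuousLinearMap.one_apply, smul_eq_mul]
    have e0 : (0:ℝ) < Real.exp R := Real.exp_pos _
    calc ‖num η * (DD η Δη * -((den η) ^ 2)⁻¹) + (den η)⁻¹ * DN η Δη‖
        ≤ |num η * (DD η Δη * -((den η) ^ 2)⁻¹)| + |(den η)⁻¹ * DN η Δη| := by
          rw [Real.norm_eq_abs]; exact abs_add_le _ _
      _ = |num η| * (|DD η Δη| * ((den η) ^ 2)⁻¹) + (den η)⁻¹ * |DN η Δη| := by
          rw [abs_mul, abs_mul, abs_neg, abs_of_pos (inv_pos.2 (pow_pos (hden_pos η) 2)),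
            abs_mul, abs_of_pos hdinv0]
      _ ≤ Real.exp R * ((Real.exp R * ‖Δη‖) * (Real.exp R * Real.exp R))
            + Real.exp R * (Real.exp R * ‖Δη‖) := by
          gcongr
      _ = (Real.exp R * Real.exp R * Real.exp R * Real.exp R
            + Real.exp R * Real.exp R) * ‖Δη‖ := by ring
      _ ≤ (2 * Real.exp (4 * R)) * ‖Δη‖ := by
          refine mul_le_mul_of_nonneg_right ?_ (norm_nonneg _)
          have h4 : Real.exp R * Real.exp R * Real.exp R * Real.exp R = Real.exp (4 * R) := by
            rw [← Real.exp_add, ← Real.exp_add, ← Real.exp_add]; ring_nf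
          have h2 : Real.exp R * Real.exp R = Real.exp (2 * R) := by
            rw [← Real.exp_add]; ring_nf
          rw [h4, h2]
          have : Real.exp (2 * R) ≤ Real.exp (4 * R) := Real.exp_le_exp.2 (by linarith)
          linarith
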